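/- Let E be a row-finite graph. E is acyclic if and only if for every nonzero a ∈ M_E^{gr} and every negative integer n, the elements ^n a and a are incomparable (neither ^n a ≤ a nor a ≤ ^n a holds strictly, and they are not equal). -/

import Mathlib

set_option linter.unusedSectionVars false

/-- The algebraic preorder on a commutative monoid: `a ≤ b` iff `b = a + c` for some `c`. -/
def algLE {M : Type*} [AddCommMonoid M] (a b : M) : Prop := ∃ c, b = a + c

/-- A row-finite directed graph: vertices `V`, edges `Ed`, source `s`, range `r`,
and for each vertex the (finite) set of edges it emits. -/
structure RFGraph (V : Type) (Ed : Type) where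
  s : Ed → V
  r : Ed → V
  emit : V → Finset Ed
  mem_emit : ∀ e v, e ∈ emit v ↔ s e = v

namespace RFGraph

variable {V Ed : Type} [DecidableEq V] (G : RFGraph V Ed)

/-- The one-step rewriting relation `→₁` on the free commutative monoid `Multiset V`:
replace one occurrence of a non-sink vertex `v` by the sum of ranges of edges emitted by `v`. -/
def Step1 (a b : Multiset V) : Prop :=
  ∃ v : V, v ∈ a ∧ G.emit v ≠ ∅ ∧ b = a.erase v + (G.emit v).val.map G.r

/-- The reflexive-transitive closure `→` of `→₁`. -/
def Step : Multiset V → Multiset V → Prop := Relation.ReflTransGen G.Step1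

/-- The congruence on the free commutative monoid generated by `→₁`. -/
def gcon : AddCon (Multiset V) := addConGen G.Step1

/-- The graph monoid `M_E`. -/
def GM := G.gcon.Quotient

instance : AddCommMonoid G.GM := inferInstanceAs (AddCommMonoid G.gcon.Quotient)

/-- One-step rewriting for the talented monoid: replace `v(i)` by `Σ_{e ∈ s⁻¹(v)} r(e)(i+1)`. -/
def TStep1 (a b : Multiset (V × ℤ)) : Prop :=
  ∃ (v : V) (i : ℤ), (v, i) ∈ a ∧ G.emit v ≠ ∅ ∧
    b = a.erase (v, i) + (G.emit v).val.map (fun e => (G.r e, i + 1))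

/-- The congruence generated by the talented one-step relation. -/
def tcon : AddCon (Multiset (V × ℤ)) := addConGen G.TStep1

/-- The talented monoid `M_E^{gr}`. -/
def TM := G.tcon.Quotient

instance : AddCommMonoid G.TM := inferInstanceAs (AddCommMonoid G.tcon.Quotient)

/-- The generator `v(i)` of the talented monoid. -/
def tgen (v : V) (i : ℤ) : G.TM := G.tcon.mk' {(v, i)}

/-- The shift `v(i) ↦ v(i+n)` on the free commutative monoid `Multiset (V × ℤ)`. -/
def shiftMul (n : ℤ) : Multiset (V × ℤ) →+ Multiset (V × ℤ) where
  toFun a := a.map fun p => (p.1, p.2 + n)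
  map_zero' := rfl
  map_add' a b := Multiset.map_add (fun p => (p.1, p.2 + n)) a b

lemma shift_inj (n : ℤ) : Function.Injective (fun p : V × ℤ => (p.1, p.2 + n)) := by
  rintro ⟨a, b⟩ ⟨c, d⟩ h
  simp only [Prod.mk.injEq] at h
  exact Prod.ext h.1 (by omega)

lemma tstep1_shift (n : ℤ) {a b : Multiset (V × ℤ)} (h : G.TStep1 a b) :
    G.TStep1 (shiftMul n a) (shiftMul n b) := by
  obtain ⟨v, i, hv, hne, rfl⟩ := h
  refine ⟨v, i + n, Multiset.mem_map.2 ⟨(v, i), hv, rfl⟩, hne, ?_⟩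
  show Multiset.map _ _ = _
  rw [Multiset.map_add]
  congr 1
  · exact (Multiset.map_erase _ (shift_inj n) (v, i) a)
  · rw [Multiset.map_map]
    congr 1
    funext e
    simp only [Function.comp_apply]
    congr 1
    omega

lemma tcon_shift (n : ℤ) {a b : Multiset (V × ℤ)} (h : G.tcon a b) :
    G.tcon (shiftMul n a) (shiftMul n b) := by
  have hle : addConGen G.TStep1 ≤
      { r := fun a b => G.tcon (shiftMul n a) (shiftMul n b)
        iseqv := ⟨fun _ => G.tcon.refl _, fun h => G.tcon.symm h,
          fun h₁ h₂ => G.tcon.trans h₁ h₂⟩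
        add' := fun h₁ h₂ => by
          simpa only [map_add] using G.tcon.add h₁ h₂ } := by
    refine AddCon.addConGen_le.2 fun x y hxy => ?_
    exact AddConGen.Rel.of _ _ (G.tstep1_shift n hxy)
  exact hle h

/-- The `ℤ`-action on the talented monoid, `ⁿ(v(i)) = v(i+n)`. -/
def tshift (n : ℤ) : G.TM →+ G.TM :=
  G.tcon.lift (G.tcon.mk'.comp (shiftMul n)) (by
    intro a b h
    show G.tcon.mk' (shiftMul n a) = G.tcon.mk' (shiftMul n b)
    exact (AddCon.eq _).2 (G.tcon_shift n h))

/-- Reachability: there is a (possibly trivial) path from `u` to `v`. -/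
def Reaches (u v : V) : Prop :=
  Relation.ReflTransGen (fun a b => ∃ e : Ed, G.s e = a ∧ G.r e = b) u v

/-- A cycle: a nonempty path of edges, closed up, with distinct source vertices. -/
def IsCycle (p : List Ed) : Prop :=
  ∃ h : p ≠ [], List.Chain' (fun e f => G.r e = G.s f) p ∧
    G.r (p.getLast h) = G.s (p.head h) ∧ (p.map G.s).Nodup

/-- The cycle `p` has an exit: some vertex on it emits an edge not on the cycle. -/
def HasExit (p : List Ed) : Prop :=
  ∃ e : Ed, (∃ f ∈ p, G.s e = G.s f) ∧ e ∉ p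

/-- The cycle `p` has no exit: every vertex on it emits exactly its cycle edge. -/
def NoExit (p : List Ed) : Prop :=
  ∀ e ∈ p, G.emit (G.s e) = {e}

/-- `ℤ`-order-ideals of the talented monoid. -/
def IsOrderIdeal (I : Set G.TM) : Prop :=
  (0 : G.TM) ∈ I ∧ (∀ a b : G.TM, a ∈ I → b ∈ I → a + b ∈ I) ∧
    (∀ (n : ℤ) (a : G.TM), a ∈ I → G.tshift n a ∈ I) ∧
    (∀ a b : G.TM, algLE a b → b ∈ I → a ∈ I)

/-- The smallest `ℤ`-order-ideal of `M_E^{gr}` containing `v(0)`. -/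
def genIdeal (v : V) : Set G.TM :=
  ⋂₀ {I : Set G.TM | G.IsOrderIdeal I ∧ G.tgen v 0 ∈ I}

/-- Minimality in the talented monoid: `0 ≠ b ≤ a` implies `a ≤ b`. -/
def TMin (a : G.TM) : Prop := ∀ b : G.TM, b ≠ 0 → algLE b a → algLE a b

/-- The covering graph `\bar E`. -/
def cover : RFGraph (V × ℤ) (Ed × ℤ) where
  s p := (G.s p.1, p.2)
  r p := (G.r p.1, p.2 + 1)
  emit p := (G.emit p.1).map ⟨fun e => (e, p.2), fun a b h => by
    simpa using congrArg Prod.fst h⟩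
  mem_emit := by
    rintro ⟨e, n⟩ ⟨v, m⟩
    simp only [Finset.mem_map, Function.Embedding.coeFn_mk, Prod.mk.injEq, G.mem_emit]
    constructor
    · rintro ⟨a, ha, rfl, rfl⟩; exact ⟨ha, rfl⟩
    · rintro ⟨rfl, rfl⟩; first | exact ⟨e, rfl, rfl, rfl⟩ | exact ⟨e, rfl, rfl⟩ | exact ⟨e, by simp⟩

/-- The set of vertices on a cycle. -/
def cycVerts (p : List Ed) : Set V := {v | ∃ e ∈ p, G.s e = v}

end RFGraph
namespace RFGraph

variable {V Ed : Type} [DecidableEq V] (G : RFGraph V Ed)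

theorem algLE_trans {M : Type*} [AddCommMonoid M] {a b c : M}
    (h1 : algLE a b) (h2 : algLE b c) : algLE a c := by
  obtain ⟨x, hx⟩ := h1; obtain ⟨y, hy⟩ := h2
  exact ⟨x + y, by rw [hy, hx, add_assoc]⟩

/-- Reflexive transitive closure of the talented one-step relation. -/
def TSteps : Multiset (V × ℤ) → Multiset (V × ℤ) → Prop := Relation.ReflTransGen G.TStep1

lemma tstep1_ne_zero_right {a b : Multiset (V × ℤ)} (h : G.TStep1 a b) : b ≠ 0 := by
  obtain ⟨v, i, hv, hne, rfl⟩ := h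
  obtain ⟨e, he⟩ := Finset.nonempty_iff_ne_empty.2 hne
  intro h0
  have : (G.r e, i + 1) ∈ a.erase (v, i) + (G.emit v).val.map (fun e => (G.r e, i + 1)) :=
    Multiset.mem_add.2 (Or.inr (Multiset.mem_map.2 ⟨e, he, rfl⟩))
  rw [h0] at this
  exact Multiset.notMem_zero _ this

lemma tsteps_zero_eq {d : Multiset (V × ℤ)} (h : G.TSteps 0 d) : d = 0 := by
  induction h with
  | refl => rfl
  | tail h1 h2 ih =>
    subst ih
    obtain ⟨v, i, hv, _, _⟩ := h2
    exact absurd hv (Multiset.notMem_zero _)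

lemma tsteps_eq_zero {a : Multiset (V × ℤ)} (h : G.TSteps a 0) : a = 0 := by
  cases h.cases_tail with
  | inl h => exact h.symm
  | inr h => obtain ⟨b, _, hb⟩ := h; exact absurd rfl (G.tstep1_ne_zero_right hb)

lemma tstep1_diamond {a b c : Multiset (V × ℤ)} (hb : G.TStep1 a b) (hc : G.TStep1 a c) :
    b = c ∨ ∃ d, G.TStep1 b d ∧ G.TStep1 c d := by
  obtain ⟨v, i, hv, hve, rfl⟩ := hb
  obtain ⟨w, j, hw, hwe, rfl⟩ := hc
  by_cases hvw : (v, i) = (w, j)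
  · left
    injection hvw with h1 h2
    subst h1; subst h2; rfl
  · right
    set Mv := (G.emit v).val.map (fun e => (G.r e, i + 1)) with hMv
    set Mw := (G.emit w).val.map (fun e => (G.r e, j + 1)) with hMw
    refine ⟨((a.erase (v, i)).erase (w, j) + Mw) + Mv, ?_, ?_⟩
    · refine ⟨w, j, ?_, hwe, ?_⟩
      · exact Multiset.mem_add.2 (Or.inl ((Multiset.mem_erase_of_ne (Ne.symm hvw)).2 hw))
      · rw [Multiset.erase_add_left_pos _ ((Multiset.mem_erase_of_ne (Ne.symm hvw)).2 hw)]
        exact (add_right_comm _ _ _).symm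
    · refine ⟨v, i, ?_, hve, ?_⟩
      · exact Multiset.mem_add.2 (Or.inl ((Multiset.mem_erase_of_ne hvw).2 hv))
      · rw [Multiset.erase_add_left_pos _ ((Multiset.mem_erase_of_ne hvw).2 hv),
          Multiset.erase_comm]

lemma tstep1_cr : ∀ a b c : Multiset (V × ℤ), G.TStep1 a b → G.TStep1 a c →
    ∃ d, Relation.ReflGen G.TStep1 b d ∧ Relation.ReflTransGen G.TStep1 c d := by
  intro a b c hb hc
  rcases G.tstep1_diamond hb hc with h | ⟨d, hd1, hd2⟩
  · subst h; exact ⟨b, Relation.ReflGen.refl, Relation.ReflTransGen.refl⟩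
  · exact ⟨d, Relation.ReflGen.single hd1, Relation.ReflTransGen.single hd2⟩

lemma tstep1_add_right {a b c : Multiset (V × ℤ)} (h : G.TStep1 a b) :
    G.TStep1 (a + c) (b + c) := by
  obtain ⟨v, i, hv, hne, rfl⟩ := h
  refine ⟨v, i, Multiset.mem_add.2 (Or.inl hv), hne, ?_⟩
  rw [Multiset.erase_add_left_pos _ hv]
  exact (add_right_comm _ _ _).symm

lemma tsteps_add_right {a b c : Multiset (V × ℤ)} (h : G.TSteps a b) :
    G.TSteps (a + c) (b + c) := by
  induction h with
  | refl => exact Relation.ReflTransGen.refl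
  | tail _ h2 ih => exact ih.tail (G.tstep1_add_right h2)

lemma tsteps_add {a b c d : Multiset (V × ℤ)} (h1 : G.TSteps a b) (h2 : G.TSteps c d) :
    G.TSteps (a + c) (b + d) := by
  refine Relation.ReflTransGen.trans (G.tsteps_add_right h1) ?_
  rw [add_comm b c, add_comm b d]
  exact G.tsteps_add_right h2

/-- The join congruence coming from confluence of the rewriting system. -/
def joinCon : AddCon (Multiset (V × ℤ)) where
  r a b := ∃ d, G.TSteps a d ∧ G.TSteps b d
  iseqv := Relation.equivalence_join_reflTransGen G.tstep1_cr
  add' h1 h2 := by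
    obtain ⟨d1, hd1, hd1'⟩ := h1
    obtain ⟨d2, hd2, hd2'⟩ := h2
    exact ⟨d1 + d2, G.tsteps_add hd1 hd2, G.tsteps_add hd1' hd2'⟩

lemma tsteps_tcon {a b : Multiset (V × ℤ)} (h : G.TSteps a b) : G.tcon a b := by
  induction h with
  | refl => exact G.tcon.refl a
  | tail _ h2 ih => exact G.tcon.trans ih (AddConGen.Rel.of _ _ h2)

lemma tcon_join {a b : Multiset (V × ℤ)} (h : G.tcon a b) :
    ∃ d, G.TSteps a d ∧ G.TSteps b d := by
  have hle : addConGen G.TStep1 ≤ G.joinCon :=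
    AddCon.addConGen_le.2 fun x y hxy => ⟨y, Relation.ReflTransGen.single hxy,
      Relation.ReflTransGen.refl⟩
  exact hle h

lemma tcon_zero {a : Multiset (V × ℤ)} (h : G.tcon a 0) : a = 0 := by
  obtain ⟨d, h1, h2⟩ := G.tcon_join h
  rw [G.tsteps_zero_eq h2] at h1
  exact G.tsteps_eq_zero h1

lemma mk'_eq_zero {a : Multiset (V × ℤ)} (h : G.tcon.mk' a = 0) : a = 0 := by
  have : G.tcon.mk' a = G.tcon.mk' 0 := by rw [h, map_zero]
  exact G.tcon_zero ((AddCon.eq _).1 this)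

lemma shiftMul_apply (m : ℤ) (X : Multiset (V × ℤ)) :
    shiftMul m X = X.map (fun p => (p.1, p.2 + m)) := rfl

lemma shiftMul_shiftMul (m n : ℤ) (X : Multiset (V × ℤ)) :
    shiftMul m (shiftMul n X) = shiftMul (n + m) X := by
  show Multiset.map _ (Multiset.map _ X) = Multiset.map _ X
  rw [Multiset.map_map]
  exact Multiset.map_congr rfl fun x _ => by
    simp only [Function.comp_apply]; exact Prod.ext rfl (by omega)

lemma shiftMul_ne_zero {X : Multiset (V × ℤ)} (m : ℤ) (h : X ≠ 0) :
    shiftMul m X ≠ 0 := by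
  show Multiset.map _ X ≠ 0
  simpa [Multiset.map_eq_zero] using h

lemma tshift_mk (n : ℤ) (X : Multiset (V × ℤ)) :
    G.tshift n (G.tcon.mk' X) = G.tcon.mk' (shiftMul n X) :=
  AddCon.lift_mk' _ X

end RFGraph
namespace RFGraph

variable {V Ed : Type} [DecidableEq V] (G : RFGraph V Ed)

/-- Reachability in exactly `k` steps. -/
def ReachN : ℕ → V → V → Prop
  | 0, u, w => u = w
  | k+1, u, w => ∃ e, G.s e = u ∧ ReachN k (G.r e) w

lemma reachN_zero {u w : V} : G.ReachN 0 u w ↔ u = w := by rw [ReachN]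

lemma reachN_succ {k : ℕ} {u w : V} :
    G.ReachN (k + 1) u w ↔ ∃ e, G.s e = u ∧ G.ReachN k (G.r e) w := by rw [ReachN]

lemma reachN_trans {k d : ℕ} {u v w : V} (h1 : G.ReachN k u v) (h2 : G.ReachN d v w) :
    G.ReachN (k + d) u w := by
  induction k generalizing u with
  | zero => rw [Nat.zero_add]; rwa [G.reachN_zero.1 h1]
  | succ k ih =>
    obtain ⟨e, he, h'⟩ := G.reachN_succ.1 h1
    rw [Nat.add_right_comm]
    exact G.reachN_succ.2 ⟨e, he, ih h'⟩

/-- The full rewrite of a generator up to level `j` (stopping at sinks). -/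
def slice (j : ℤ) (x : V × ℤ) : Multiset (V × ℤ) :=
  if h : x.2 < j ∧ (G.emit x.1).Nonempty then
    (G.emit x.1).val.bind (fun e => slice j (G.r e, x.2 + 1))
  else {x}
termination_by (j - x.2).toNat
decreasing_by simp_wf; omega

lemma slice_low {j i : ℤ} {v : V} (hij : i < j) (hne : G.emit v ≠ ∅) :
    G.slice j (v, i) = (G.emit v).val.bind (fun e => G.slice j (G.r e, i + 1)) := by
  rw [slice.eq_def]; exact dif_pos ⟨hij, Finset.nonempty_iff_ne_empty.2 hne⟩

lemma slice_high {j i : ℤ} {v : V} (h : ¬(i < j ∧ G.emit v ≠ ∅)) :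
    G.slice j (v, i) = {(v, i)} := by
  rw [slice.eq_def]
  refine dif_neg fun hc => h ⟨hc.1, Finset.nonempty_iff_ne_empty.1 hc.2⟩

/-- slice applied to every element of a multiset. -/
def SliceM (j : ℤ) (X : Multiset (V × ℤ)) : Multiset (V × ℤ) := X.bind (G.slice j)

lemma SliceM_add (j : ℤ) (X Y : Multiset (V × ℤ)) :
    G.SliceM j (X + Y) = G.SliceM j X + G.SliceM j Y := Multiset.add_bind X Y _

lemma slice_ne_zero (j : ℤ) (x : V × ℤ) : G.slice j x ≠ 0 := by
  generalize hk : (j - x.2).toNat = k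
  induction k using Nat.strong_induction_on generalizing x with
  | _ k ih =>
    obtain ⟨v, i⟩ := x
    by_cases h : i < j ∧ G.emit v ≠ ∅
    · rw [G.slice_low h.1 h.2]
      obtain ⟨e, he⟩ := Finset.nonempty_iff_ne_empty.2 h.2
      simp only at hk
      have hs := ih (j - (i + 1)).toNat (by omega) (x := (G.r e, i + 1)) rfl
      obtain ⟨y, hy⟩ := Multiset.exists_mem_of_ne_zero hs
      intro h0
      have hmem : y ∈ (G.emit v).val.bind (fun e => G.slice j (G.r e, i + 1)) :=
        Multiset.mem_bind.2 ⟨e, he, hy⟩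
      rw [h0] at hmem
      exact Multiset.notMem_zero _ hmem
    · rw [G.slice_high h]; simp

lemma SliceM_ne_zero {j : ℤ} {X : Multiset (V × ℤ)} (hX : X ≠ 0) : G.SliceM j X ≠ 0 := by
  obtain ⟨x, hx⟩ := Multiset.exists_mem_of_ne_zero hX
  obtain ⟨y, hy⟩ := Multiset.exists_mem_of_ne_zero (G.slice_ne_zero j x)
  intro h0
  have : y ∈ X.bind (G.slice j) := Multiset.mem_bind.2 ⟨x, hx, hy⟩
  rw [show X.bind (G.slice j) = G.SliceM j X from rfl, h0] at this
  exact Multiset.notMem_zero _ this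

lemma slice_shift (m : ℤ) (j : ℤ) (x : V × ℤ) :
    G.slice (j + m) (x.1, x.2 + m) = shiftMul m (G.slice j x) := by
  generalize hk : (j - x.2).toNat = k
  induction k using Nat.strong_induction_on generalizing x with
  | _ k ih =>
    obtain ⟨v, i⟩ := x
    simp only at hk ⊢
    by_cases h : i < j ∧ G.emit v ≠ ∅
    · rw [G.slice_low (by omega : i + m < j + m) h.2, G.slice_low h.1 h.2]
      show _ = Multiset.map _ _
      rw [Multiset.map_bind]
      refine Multiset.bind_congr fun e _ => ?_
      have := ih (j - (i + 1)).toNat (by omega) (x := (G.r e, i + 1)) rfl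
      simp only [shiftMul_apply] at this
      rw [show i + m + 1 = i + 1 + m by ring]
      exact this
    · have h' : ¬(i + m < j + m ∧ G.emit v ≠ ∅) := by
        rw [not_and] at h ⊢; intro hlt; exact h (by omega)
      rw [G.slice_high h', G.slice_high h, shiftMul_apply, Multiset.map_singleton]

lemma SliceM_shift (m : ℤ) (j : ℤ) (X : Multiset (V × ℤ)) :
    G.SliceM (j + m) (shiftMul m X) = shiftMul m (G.SliceM j X) := by
  rw [shiftMul_apply, shiftMul_apply]
  show (Multiset.map _ X).bind _ = Multiset.map _ (X.bind _)
  rw [Multiset.bind_map, Multiset.map_bind]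
  exact Multiset.bind_congr fun x _ => by
    rw [← shiftMul_apply]; exact G.slice_shift m j x

lemma slice_trans {j j' : ℤ} (hjj : j ≤ j') (x : V × ℤ) :
    G.SliceM j' (G.slice j x) = G.slice j' x := by
  generalize hk : (j - x.2).toNat = k
  induction k using Nat.strong_induction_on generalizing x with
  | _ k ih =>
    obtain ⟨v, i⟩ := x
    simp only at hk
    by_cases h : i < j ∧ G.emit v ≠ ∅
    · rw [G.slice_low h.1 h.2, G.slice_low (by omega : i < j') h.2]
      show (Multiset.bind _ _).bind _ = _
      rw [Multiset.bind_assoc]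
      exact Multiset.bind_congr fun e _ => ih (j - (i + 1)).toNat (by omega) (x := (G.r e, i + 1)) rfl
    · rw [G.slice_high h]
      exact Multiset.singleton_bind _ _

lemma SliceM_trans {j j' : ℤ} (hjj : j ≤ j') (X : Multiset (V × ℤ)) :
    G.SliceM j' (G.SliceM j X) = G.SliceM j' X := by
  show (X.bind _).bind _ = X.bind _
  rw [Multiset.bind_assoc]
  exact Multiset.bind_congr fun x _ => G.slice_trans hjj x

lemma slice_struct {j : ℤ} {x : V × ℤ} {w : V} {l : ℤ} (hmem : (w, l) ∈ G.slice j x) :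
    ∃ d : ℕ, l = x.2 + d ∧ G.ReachN d x.1 w ∧ (l < j → G.emit w = ∅) ∧ l ≤ max x.2 j := by
  generalize hk : (j - x.2).toNat = k
  induction k using Nat.strong_induction_on generalizing x with
  | _ k ih =>
    obtain ⟨v, i⟩ := x
    simp only at hk ⊢
    by_cases h : i < j ∧ G.emit v ≠ ∅
    · rw [G.slice_low h.1 h.2] at hmem
      obtain ⟨e, he, hy⟩ := Multiset.mem_bind.1 hmem
      obtain ⟨d, hd1, hd2, hd3, hd4⟩ := ih (j - (i + 1)).toNat (by omega) hy rfl
      simp only at hd1 hd4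
      refine ⟨d + 1, by push_cast; omega,
        G.reachN_succ.2 ⟨e, (G.mem_emit e v).1 he, hd2⟩, hd3, by omega⟩
    · rw [G.slice_high h] at hmem
      obtain ⟨h1, h2⟩ := Prod.mk.injEq _ _ _ _ ▸ Multiset.mem_singleton.1 hmem
      subst h1; subst h2
      refine ⟨0, by simp, G.reachN_zero.2 rfl, fun hlt => ?_, by simp⟩
      rw [not_and] at h
      by_contra hne
      exact (h hlt) hne

end RFGraph
namespace RFGraph

variable {V Ed : Type} [DecidableEq V] (G : RFGraph V Ed)

/-- `pathFrom p u w` : the edge list `p` forms a path from `u` to `w`. -/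
def pathFrom : List Ed → V → V → Prop
  | [], u, w => u = w
  | e :: p, u, w => G.s e = u ∧ pathFrom p (G.r e) w

lemma reachN_pathFrom {k : ℕ} {u w : V} (h : G.ReachN k u w) :
    ∃ p : List Ed, p.length = k ∧ G.pathFrom p u w := by
  induction k generalizing u with
  | zero => exact ⟨[], rfl, G.reachN_zero.1 h⟩
  | succ k ih =>
    obtain ⟨e, he, h'⟩ := G.reachN_succ.1 h
    obtain ⟨p, hp, hp'⟩ := ih h'
    exact ⟨e :: p, by simp [hp], he, hp'⟩

lemma pathFrom_chain : ∀ (p : List Ed) (u w : V), G.pathFrom p u w →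
    List.Chain' (fun e f => G.r e = G.s f) p := by
  intro p
  induction p with
  | nil => intro u w _; exact List.isChain_nil
  | cons e t ih =>
    intro u w hp
    obtain ⟨hs, hp'⟩ := hp
    cases t with
    | nil => exact List.isChain_singleton e
    | cons f t' =>
      have hs' := hp'.1
      exact List.isChain_cons_cons.2 ⟨hs'.symm ▸ rfl, ih _ _ hp'⟩

lemma pathFrom_head {p : List Ed} {u w : V} (hne : p ≠ []) (h : G.pathFrom p u w) :
    G.s (p.head hne) = u := by
  cases p with
  | nil => exact absurd rfl hne
  | cons e t => exact h.1

lemma pathFrom_last : ∀ (p : List Ed) (hne : p ≠ []) (u w : V), G.pathFrom p u w →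
    G.r (p.getLast hne) = w := by
  intro p
  induction p with
  | nil => intro hne; exact absurd rfl hne
  | cons e t ih =>
    intro hne u w hp
    cases t with
    | nil => exact hp.2
    | cons f t' =>
      rw [List.getLast_cons (by simp : f :: t' ≠ [])]
      exact ih (by simp) _ _ hp.2

lemma pair_sublist_decomp {e f : Ed} : ∀ {p : List Ed}, [e, f].Sublist p →
    ∃ p₁ p₂ p₃ : List Ed, p = p₁ ++ e :: (p₂ ++ f :: p₃) := by
  intro p h
  induction p with
  | nil => simp at h
  | cons a t ih =>
    cases h with
    | cons _ h' =>
      obtain ⟨p₁, p₂, p₃, rfl⟩ := ih h'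
      exact ⟨a :: p₁, p₂, p₃, rfl⟩
    | cons_cons _ h' =>
      obtain ⟨s', t', rfl⟩ := List.append_of_mem (List.singleton_sublist.1 h')
      exact ⟨[], s', t', rfl⟩

lemma closed_to_cycle : ∀ (N : ℕ) (p : List Ed) (hne : p ≠ []), p.length ≤ N →
    List.Chain' (fun e f => G.r e = G.s f) p →
    G.r (p.getLast hne) = G.s (p.head hne) → ∃ c, G.IsCycle c := by
  intro N
  induction N with
  | zero => intro p hne hlen; exact absurd (List.length_eq_zero_iff.1 (Nat.le_zero.1 hlen)) hne
  | succ N ih =>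
    intro p hne hlen hch hcl
    by_cases hnd : (p.map G.s).Nodup
    · exact ⟨p, hne, hch, hcl, hnd⟩
    · obtain ⟨a, ha⟩ := not_forall.1 (mt List.nodup_iff_sublist.2 hnd)
      have hsub : [a, a].Sublist (p.map G.s) := not_not.1 ha
      obtain ⟨l', hl', hml⟩ := List.sublist_map_iff.1 hsub
      obtain ⟨e, f, rfl, hse, hsf⟩ : ∃ e f, l' = [e, f] ∧ G.s e = a ∧ G.s f = a := by
        cases l' with
        | nil => simp at hml
        | cons e l'' =>
          cases l'' with
          | nil => simp at hml
          | cons f l''' =>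
            cases l''' with
            | nil =>
              simp only [List.map_cons, List.map_nil, List.cons.injEq, and_true] at hml
              exact ⟨e, f, rfl, hml.1.symm, hml.2.symm⟩
            | cons g l4 => simp at hml
      obtain ⟨p₁, p₂, p₃, rfl⟩ := pair_sublist_decomp hl'
      -- the shorter closed path `e :: p₂`
      have hinf : (e :: p₂ ++ [f]).Sublist (p₁ ++ e :: (p₂ ++ f :: p₃)) := by
        refine List.Sublist.trans ?_ (List.sublist_append_right p₁ _)
        have : e :: p₂ ++ [f] = e :: (p₂ ++ [f]) := by simp
        rw [this]
        refine List.Sublist.cons₂ e ?_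
        exact (List.append_sublist_append_left p₂).2 (by simp)
      have hch2 : List.Chain' (fun e f => G.r e = G.s f) (e :: p₂ ++ [f]) := by
        refine hch.infix ?_
        refine ⟨p₁, p₃, ?_⟩
        simp
      have hch3 := List.isChain_append.1 hch2
      have hlast : G.r ((e :: p₂).getLast (by simp)) = G.s f := by
        have := hch3.2.2 ((e :: p₂).getLast (by simp))
          (by rw [List.getLast?_eq_getLast (by simp : e :: p₂ ≠ [])]; rfl) f rfl
        exact this
      refine ih (e :: p₂) (by simp) ?_ hch3.1 ?_
      · have : (p₁ ++ e :: (p₂ ++ f :: p₃)).length = p₁.length + p₂.length + p₃.length + 2 := by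
          simp; omega
        rw [this] at hlen
        simp only [List.length_cons]
        omega
      · rw [hlast, hsf, ← hse]
        simp

lemma reach_cycle {v : V} {k : ℕ} (hk : k ≠ 0) (h : G.ReachN k v v) : ∃ c, G.IsCycle c := by
  obtain ⟨p, hlen, hpf⟩ := G.reachN_pathFrom h
  have hne : p ≠ [] := by
    intro h0; rw [h0] at hlen; exact hk hlen.symm
  exact G.closed_to_cycle p.length p hne le_rfl (G.pathFrom_chain p _ _ hpf)
    (by rw [G.pathFrom_last p hne _ _ hpf, G.pathFrom_head hne hpf])

end RFGraph
namespace RFGraph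

variable {V Ed : Type} [DecidableEq V] (G : RFGraph V Ed)

/-- The top level part of the slice. -/
def sliceTop (j : ℤ) (X : Multiset (V × ℤ)) : Multiset V :=
  ((G.SliceM j X).filter (fun x => x.2 = j)).map Prod.fst

lemma tstep1_sliceM {X Y : Multiset (V × ℤ)} (h : G.TStep1 X Y) :
    ∃ j₀ : ℤ, ∀ j ≥ j₀, G.SliceM j X = G.SliceM j Y := by
  obtain ⟨v, i, hv, hne, rfl⟩ := h
  refine ⟨i + 1, fun j hj => ?_⟩
  have hX : X = (v, i) ::ₘ X.erase (v, i) := (Multiset.cons_erase hv).symm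
  have h1 : G.SliceM j X = G.SliceM j (X.erase (v, i)) + G.slice j (v, i) := by
    conv_lhs => rw [hX]
    rw [show G.SliceM j ((v, i) ::ₘ X.erase (v, i))
        = G.slice j (v, i) + G.SliceM j (X.erase (v, i)) from Multiset.cons_bind _ _ _]
    exact add_comm _ _
  rw [h1, G.SliceM_add, G.slice_low (by omega) hne]
  congr 1
  show _ = (Multiset.map _ _).bind _
  rw [Multiset.bind_map]

lemma tsteps_sliceM {X Y : Multiset (V × ℤ)} (h : G.TSteps X Y) :
    ∃ j₀ : ℤ, ∀ j ≥ j₀, G.SliceM j X = G.SliceM j Y := by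
  induction h with
  | refl => exact ⟨0, fun _ _ => rfl⟩
  | tail h1 h2 ih =>
    obtain ⟨j₁, hj₁⟩ := ih
    obtain ⟨j₂, hj₂⟩ := G.tstep1_sliceM h2
    exact ⟨max j₁ j₂, fun j hj => (hj₁ j (le_trans (le_max_left _ _) hj)).trans
      (hj₂ j (le_trans (le_max_right _ _) hj))⟩

lemma tcon_sliceM {X Y : Multiset (V × ℤ)} (h : G.tcon X Y) :
    ∃ j₀ : ℤ, ∀ j ≥ j₀, G.SliceM j X = G.SliceM j Y := by
  obtain ⟨d, h1, h2⟩ := G.tcon_join h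
  obtain ⟨j₁, hj₁⟩ := G.tsteps_sliceM h1
  obtain ⟨j₂, hj₂⟩ := G.tsteps_sliceM h2
  exact ⟨max j₁ j₂, fun j hj => (hj₁ j (le_trans (le_max_left _ _) hj)).trans
    (hj₂ j (le_trans (le_max_right _ _) hj)).symm⟩

lemma exists_level_bound (A : Multiset (V × ℤ)) : ∃ N : ℤ, ∀ x ∈ A, x.2 < N := by
  induction A using Multiset.induction_on with
  | empty => exact ⟨0, by simp⟩
  | cons a s ih =>
    obtain ⟨N, hN⟩ := ih
    refine ⟨max N (a.2 + 1), fun x hx => ?_⟩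
    rcases Multiset.mem_cons.1 hx with rfl | h
    · exact lt_max_of_lt_right (by omega)
    · exact lt_max_of_lt_left (hN x h)

lemma no_shift_absorb (hacyc : ¬ ∃ p : List Ed, G.IsCycle p) {A C : Multiset (V × ℤ)} {m : ℤ}
    (hA : A ≠ 0) (hm : m ≠ 0) (h : G.tcon A (shiftMul m A + C)) : False := by
  classical
  obtain ⟨j₀, hj₀⟩ := G.tcon_sliceM h
  obtain ⟨N, hN⟩ := exists_level_bound A
  set J := max j₀ N with hJ
  have star : ∀ j : ℤ, J ≤ j →
      G.SliceM j A = shiftMul m (G.SliceM (j - m) A) + G.SliceM j C := by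
    intro j hj
    rw [hj₀ j (le_trans (le_max_left _ _) hj), G.SliceM_add]
    congr 1
    have := G.SliceM_shift m (j - m) A
    rw [sub_add_cancel] at this
    exact this
  have memB : ∀ j : ℤ, J ≤ j → ∀ w l, (w, l) ∈ G.SliceM j A →
      l ≤ j ∧ (l < j → G.emit w = ∅) := by
    intro j hj w l hmem
    obtain ⟨x, hx, hy⟩ := Multiset.mem_bind.1 hmem
    obtain ⟨d, hd1, _, hd3, hd4⟩ := G.slice_struct hy
    have hxN : x.2 < N := hN x hx
    have hxj : x.2 ≤ j := by omega
    rw [max_eq_right hxj] at hd4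
    exact ⟨hd4, hd3⟩
  have startop : ∀ j : ℤ, J ≤ j → G.sliceTop j A = G.sliceTop (j - m) A + G.sliceTop j C := by
    intro j hj
    show ((G.SliceM j A).filter _).map _ = _
    rw [star j hj, Multiset.filter_add, Multiset.map_add]
    congr 1
    rw [shiftMul_apply, Multiset.filter_map,
      Multiset.filter_congr (q := fun x => x.2 = j - m)
        (fun x _ => by show x.2 + m = j ↔ x.2 = j - m; omega),
      Multiset.map_map]
    rfl
  have hTmem : ∀ j : ℤ, ∀ w, w ∈ G.sliceTop j A → (w, j) ∈ G.SliceM j A := by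
    intro j w hw
    obtain ⟨x, hxf, hxw⟩ := Multiset.mem_map.1 hw
    obtain ⟨hx1, hx2⟩ := Multiset.mem_filter.1 hxf
    obtain ⟨w', l⟩ := x
    cases hxw
    simp only at hx2
    rwa [hx2] at hx1
  by_cases hTz : ∃ j : ℤ, J ≤ j ∧ G.sliceTop j A = 0
  · -- the stable all-sink case
    obtain ⟨j, hjJ, hTj⟩ := hTz
    have hsink : ∀ w l, (w, l) ∈ G.SliceM j A → G.emit w = ∅ := by
      intro w l hmem
      obtain ⟨hle, hlow⟩ := memB j hjJ w l hmem
      rcases lt_or_eq_of_le hle with hlt | heq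
      · exact hlow hlt
      · exfalso
        have : w ∈ G.sliceTop j A :=
          Multiset.mem_map.2 ⟨(w, l), Multiset.mem_filter.2 ⟨hmem, heq⟩, rfl⟩
        rw [hTj] at this
        exact Multiset.notMem_zero _ this
    have hstable : ∀ j' : ℤ, j ≤ j' → G.SliceM j' A = G.SliceM j A := by
      intro j' hj'
      rw [← G.SliceM_trans hj' A]
      have hone : ∀ x ∈ G.SliceM j A, G.slice j' x = ({x} : Multiset (V × ℤ)) := by
        rintro ⟨w, l⟩ hx
        exact G.slice_high (fun hc => hc.2 (hsink w l hx))
      show (G.SliceM j A).bind (G.slice j') = _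
      calc (G.SliceM j A).bind (G.slice j')
          = (G.SliceM j A).bind (fun x => ({x} : Multiset (V × ℤ))) := Multiset.bind_congr hone
        _ = G.SliceM j A := by
            have := Multiset.bind_singleton (G.SliceM j A) (id : V × ℤ → V × ℤ)
            simp only [id] at this
            rw [this, Multiset.map_id']
    have hq0 : (0 : ℤ) < (m.natAbs : ℤ) := by omega
    have h1 := star (j + (m.natAbs : ℤ)) (by omega)
    rw [hstable (j + (m.natAbs : ℤ)) (by omega), hstable ((j + (m.natAbs : ℤ)) - m) (by omega)]
      at h1
    set S := G.SliceM j A with hS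
    have hcard := congrArg Multiset.card h1
    rw [Multiset.card_add, shiftMul_apply, Multiset.card_map] at hcard
    have hC0 : G.SliceM (j + (m.natAbs : ℤ)) C = 0 := Multiset.card_eq_zero.1 (by omega)
    rw [hC0, add_zero] at h1
    have hsum := congrArg (fun X : Multiset (V × ℤ) => (X.map Prod.snd).sum) h1
    simp only [shiftMul_apply, Multiset.map_map] at hsum
    rw [show (Prod.snd ∘ fun p : V × ℤ => (p.1, p.2 + m)) = (fun p : V × ℤ => p.2 + m)
        from rfl, Multiset.sum_map_add, Multiset.map_const', Multiset.sum_replicate] at hsum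
    have hS0 : S ≠ 0 := G.SliceM_ne_zero hA
    have hcard' : Multiset.card S ≠ 0 := fun hc => hS0 (Multiset.card_eq_zero.1 hc)
    rw [nsmul_eq_mul] at hsum
    have h0 : (Multiset.card S : ℤ) * m = 0 := left_eq_add.1 hsum
    rcases mul_eq_zero.1 h0 with hc | hmz
    · exact hcard' (by exact_mod_cast hc)
    · exact hm hmz
  · push_neg at hTz
    have hparent : ∀ j : ℤ, J ≤ j → ∀ j' : ℤ, j < j' → ∀ w, (w, j') ∈ G.SliceM j' A →
        ∃ u, u ∈ G.sliceTop j A ∧ G.ReachN (j' - j).toNat u w := by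
      intro j hj j' hj' w hmem
      rw [← G.SliceM_trans (le_of_lt hj') A] at hmem
      obtain ⟨x, hx, hy⟩ := Multiset.mem_bind.1 hmem
      obtain ⟨u, i⟩ := x
      obtain ⟨hile, hlow⟩ := memB j hj u i hx
      have hij : i = j := by
        by_cases he : G.emit u = ∅
        · rw [G.slice_high (fun hc => hc.2 he)] at hy
          have h2 := Multiset.mem_singleton.1 hy
          have : j' = i := congrArg Prod.snd h2
          omega
        · by_contra hne
          exact he (hlow (lt_of_le_of_ne hile hne))
      subst hij
      obtain ⟨d, hd1, hd2, _, _⟩ := G.slice_struct hy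
      simp only at hd1 hd2
      refine ⟨u, Multiset.mem_map.2 ⟨(u, i), Multiset.mem_filter.2 ⟨hx, rfl⟩, rfl⟩, ?_⟩
      rw [show (j' - i).toNat = d by omega]
      exact hd2
    set q : ℕ := m.natAbs with hqdef
    have hq : q ≠ 0 := Int.natAbs_ne_zero.2 hm
    have hWkey : ∃ W : Finset V, W.Nonempty ∧ ∀ w ∈ W, ∃ u ∈ W, G.ReachN q u w := by
      rcases lt_or_gt_of_ne hm with hmneg | hmpos
      · -- m < 0
        have hqm : (q : ℤ) = -m := by omega
        set F : ℕ → Finset V := fun k => (G.sliceTop (J + (k : ℤ) * (q : ℤ)) A).toFinset with hF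
        have hFcast : ∀ k : ℕ, F (k + 1)
            = (G.sliceTop (J + ((k : ℤ) + 1) * (q : ℤ)) A).toFinset := by
          intro k
          simp only [hF, Nat.cast_add, Nat.cast_one]
        have hJk : ∀ k : ℕ, J ≤ J + (k : ℤ) * (q : ℤ) := by
          intro k
          have : (0 : ℤ) ≤ (k : ℤ) * (q : ℤ) := by positivity
          linarith
        have hTrel : ∀ k : ℕ, G.sliceTop (J + (k : ℤ) * (q : ℤ)) A
            = G.sliceTop (J + ((k : ℤ) + 1) * (q : ℤ)) A + G.sliceTop (J + (k : ℤ) * (q : ℤ)) C := by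
          intro k
          have hs := startop (J + (k : ℤ) * (q : ℤ)) (hJk k)
          rw [show (J + (k : ℤ) * (q : ℤ)) - m = J + ((k : ℤ) + 1) * (q : ℤ) by
            rw [show m = -(q : ℤ) by omega]; ring] at hs
          exact hs
        have hFdec : ∀ k, F (k + 1) ⊆ F k := by
          intro k w hw
          simp only [hF, Multiset.mem_toFinset] at hw ⊢
          rw [hTrel k]
          push_cast at hw
          exact Multiset.mem_add.2 (Or.inl hw)
        have hstab : ∃ K, F (K + 1) = F K := by
          by_contra hcon
          push_neg at hcon
          have hlt : ∀ k, (F (k + 1)).card < (F k).card := fun k =>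
            Finset.card_lt_card (Finset.ssubset_iff_subset_ne.2 ⟨hFdec k, hcon k⟩)
          have hsum : ∀ k, (F k).card + k ≤ (F 0).card := by
            intro k
            induction k with
            | zero => omega
            | succ k ih => have := hlt k; omega
          have := hsum ((F 0).card + 1)
          omega
        obtain ⟨K, hK⟩ := hstab
        refine ⟨F (K + 1), ?_, ?_⟩
        · obtain ⟨w, hw⟩ := Multiset.exists_mem_of_ne_zero
            (hTz (J + ((K : ℤ) + 1) * (q : ℤ))
              (by have h1 : (0 : ℤ) ≤ ((K : ℤ) + 1) * (q : ℤ) := by positivity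
                  linarith))
          rw [hFcast K]
          exact ⟨w, Multiset.mem_toFinset.2 hw⟩
        · intro w hw
          rw [hFcast K] at hw
          rw [Multiset.mem_toFinset] at hw
          have hwmem : (w, J + ((K : ℤ) + 1) * (q : ℤ))
              ∈ G.SliceM (J + ((K : ℤ) + 1) * (q : ℤ)) A := hTmem _ _ hw
          obtain ⟨u, hu, hr⟩ := hparent (J + (K : ℤ) * (q : ℤ)) (hJk K)
            (J + ((K : ℤ) + 1) * (q : ℤ))
            (by have h1 : ((K : ℤ) + 1) * (q : ℤ) = (K : ℤ) * (q : ℤ) + (q : ℤ) := by ring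
                have h2 : (0 : ℤ) < (q : ℤ) := by omega
                linarith) w hwmem
          refine ⟨u, ?_, ?_⟩
          · rw [hK]
            exact Multiset.mem_toFinset.2 hu
          · rwa [show ((J + ((K : ℤ) + 1) * (q : ℤ)) - (J + (K : ℤ) * (q : ℤ))).toNat = q by
              rw [show (J + ((K : ℤ) + 1) * (q : ℤ)) - (J + (K : ℤ) * (q : ℤ)) = (q : ℤ) by ring]
              exact Int.toNat_natCast q] at hr
      · -- m > 0
        refine ⟨(G.sliceTop J A).toFinset, ?_, ?_⟩
        · obtain ⟨w, hw⟩ := Multiset.exists_mem_of_ne_zero (hTz J le_rfl)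
          exact ⟨w, Multiset.mem_toFinset.2 hw⟩
        · intro w hw
          have hmono : G.sliceTop (J + m) A = G.sliceTop J A + G.sliceTop (J + m) C := by
            have hs := startop (J + m) (by omega)
            rw [show (J + m) - m = J by ring] at hs
            exact hs
          have hwT : w ∈ G.sliceTop (J + m) A := by
            rw [hmono]
            exact Multiset.mem_add.2 (Or.inl (Multiset.mem_toFinset.1 hw))
          obtain ⟨u, hu, hr⟩ := hparent J le_rfl (J + m) (by omega) w (hTmem _ _ hwT)
          refine ⟨u, Multiset.mem_toFinset.2 hu, ?_⟩
          rwa [show ((J + m) - J).toNat = q by omega] at hr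
    obtain ⟨W, ⟨w₀, hw₀⟩, hkey⟩ := hWkey
    have key' : ∀ w : V, ∃ u : V, w ∈ W → u ∈ W ∧ G.ReachN q u w := by
      intro w
      by_cases hw : w ∈ W
      · obtain ⟨u, hu, hr⟩ := hkey w hw
        exact ⟨u, fun _ => ⟨hu, hr⟩⟩
      · exact ⟨w, fun hmem => absurd hmem hw⟩
    choose g hg using key'
    have hiter : ∀ k : ℕ, g^[k] w₀ ∈ W := by
      intro k
      induction k with
      | zero => exact hw₀
      | succ k ih => rw [Function.iterate_succ_apply']; exact (hg _ ih).1
    have hchain : ∀ d k : ℕ, G.ReachN (d * q) (g^[k + d] w₀) (g^[k] w₀) := by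
      intro d
      induction d with
      | zero =>
        intro k
        rw [Nat.zero_mul, Nat.add_zero]
        exact G.reachN_zero.2 rfl
      | succ d ih =>
        intro k
        have h1 : G.ReachN q (g^[k + d + 1] w₀) (g^[k + d] w₀) := by
          rw [Function.iterate_succ_apply']
          exact (hg _ (hiter (k + d))).2
        have h2 := G.reachN_trans h1 (ih k)
        rw [show q + d * q = (d + 1) * q by ring] at h2
        rwa [show k + (d + 1) = k + d + 1 by ring]
    obtain ⟨x, hx, y, hy, hxy, hfeq⟩ := Finset.exists_ne_map_eq_of_card_lt_of_maps_to
      (s := Finset.range (W.card + 1)) (t := W) (by simp) (fun k _ => hiter k)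
    apply hacyc
    rcases hxy.lt_or_gt with hlt | hlt
    · have := hchain (y - x) x
      rw [show x + (y - x) = y by omega] at this
      rw [hfeq] at this
      exact G.reach_cycle (Nat.mul_ne_zero (by omega) hq) this
    · have := hchain (x - y) y
      rw [show y + (x - y) = x by omega] at this
      rw [hfeq] at this
      exact G.reach_cycle (Nat.mul_ne_zero (by omega) hq) this

end RFGraph
namespace RFGraph

variable {V Ed : Type} [DecidableEq V] (G : RFGraph V Ed)

lemma shiftMul_zero (X : Multiset (V × ℤ)) : shiftMul (0 : ℤ) X = X := by
  rw [shiftMul_apply]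
  have : ∀ p : V × ℤ, ((p.1, p.2 + 0) : V × ℤ) = p := fun p => by
    exact Prod.ext rfl (by omega)
  rw [Multiset.map_congr rfl (fun x _ => this x), Multiset.map_id']

lemma tgen_ne_zero (v : V) (i : ℤ) : G.tgen v i ≠ 0 := by
  intro h0
  have := G.mk'_eq_zero h0
  simp at this

lemma tshift_tgen (n : ℤ) (v : V) (i : ℤ) :
    G.tshift n (G.tgen v i) = G.tgen v (i + n) := by
  show G.tshift n (G.tcon.mk' {(v, i)}) = _
  rw [G.tshift_mk, shiftMul_apply, Multiset.map_singleton]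
  rfl

lemma tgen_step_le (e : Ed) (i : ℤ) :
    algLE (G.tgen (G.r e) (i + 1)) (G.tgen (G.s e) i) := by
  have he : e ∈ G.emit (G.s e) := (G.mem_emit e (G.s e)).2 rfl
  have hne : G.emit (G.s e) ≠ ∅ := Finset.ne_empty_of_mem he
  set M := (G.emit (G.s e)).val.map (fun f => (G.r f, i + 1)) with hM
  have hmem : (G.r e, i + 1) ∈ M := Multiset.mem_map.2 ⟨e, he, rfl⟩
  have hstep : G.TStep1 {(G.s e, i)} M := by
    refine ⟨G.s e, i, Multiset.mem_singleton_self _, hne, ?_⟩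
    rw [Multiset.erase_singleton, zero_add]
  have hcon : G.tcon {(G.s e, i)} M := AddConGen.Rel.of _ _ hstep
  refine ⟨G.tcon.mk' (M.erase (G.r e, i + 1)), ?_⟩
  have h1 : G.tgen (G.s e) i = G.tcon.mk' M := (AddCon.eq _).2 hcon
  have hMeq : M = {(G.r e, i + 1)} + M.erase (G.r e, i + 1) := by
    rw [Multiset.singleton_add, Multiset.cons_erase hmem]
  rw [h1]
  conv_lhs => rw [hMeq]
  rw [map_add]
  rfl

lemma tgen_path_le : ∀ (p : List Ed) (hne : p ≠ []) (i : ℤ),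
    List.Chain' (fun e f => G.r e = G.s f) p →
    algLE (G.tgen (G.r (p.getLast hne)) (i + (p.length : ℤ))) (G.tgen (G.s (p.head hne)) i) := by
  intro p
  induction p with
  | nil => intro hne; exact absurd rfl hne
  | cons e t ih =>
    intro hne i hch
    cases t with
    | nil =>
      simp only [List.length_cons, List.length_nil, List.head_cons]
      rw [show (([e] : List Ed)).getLast hne = e from rfl]
      rw [show ((0 + 1 : ℕ) : ℤ) = 1 by norm_num]
      exact G.tgen_step_le e i
    | cons f t' =>
      have hch' := List.isChain_cons_cons.1 hch
      have hstep := G.tgen_step_le e i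
      have hih := ih (by simp) (i + 1) hch'.2
      rw [List.getLast_cons (by simp : f :: t' ≠ [])]
      refine algLE_trans ?_ hstep
      have harith : (i + 1) + (((f :: t').length : ℕ) : ℤ)
          = i + (((e :: f :: t').length : ℕ) : ℤ) := by
        simp only [List.length_cons]
        push_cast
        ring
      simp only [List.head_cons] at hih
      rw [harith, ← hch'.1] at hih
      exact hih

end RFGraph

/-- The graph `E` is acyclic if and only if for every nonzero `a ∈ M_E^{gr}` and
every negative integer `n`, the elements `ⁿa` and `a` are incomparable. -/
theorem acyclic_iff_incomparable {V Ed : Type} [DecidableEq V] (G : RFGraph V Ed) :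
    (¬ ∃ p : List Ed, G.IsCycle p) ↔
      ∀ a : G.TM, a ≠ 0 → ∀ n : ℤ, n < 0 →
        ¬ algLE (G.tshift n a) a ∧ ¬ algLE a (G.tshift n a) := by
  constructor
  · intro hacyc a ha n hn
    obtain ⟨A, rfl⟩ := AddCon.mk'_surjective (c := G.tcon) a
    have hA : A ≠ 0 := by
      intro h0
      rw [h0, map_zero] at ha
      exact ha rfl
    constructor
    · rintro ⟨c, hc⟩
      obtain ⟨C, rfl⟩ := AddCon.mk'_surjective (c := G.tcon) c
      rw [G.tshift_mk] at hc
      replace hc := hc.trans (map_add G.tcon.mk' (RFGraph.shiftMul n A) C).symm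
      exact G.no_shift_absorb hacyc hA (by omega) ((AddCon.eq _).1 hc)
    · rintro ⟨c, hc⟩
      obtain ⟨C, rfl⟩ := AddCon.mk'_surjective (c := G.tcon) c
      rw [G.tshift_mk] at hc
      replace hc := hc.trans (map_add G.tcon.mk' A C).symm
      have h2 : G.tcon (RFGraph.shiftMul n A) (A + C) := (AddCon.eq _).1 hc
      have h3 : G.tcon (RFGraph.shiftMul n A)
          (RFGraph.shiftMul (-n) (RFGraph.shiftMul n A) + C) := by
        rwa [RFGraph.shiftMul_shiftMul, show n + -n = 0 by ring, RFGraph.shiftMul_zero]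
      exact G.no_shift_absorb hacyc (RFGraph.shiftMul_ne_zero n hA) (by omega) h3
  · intro hcomp hcyc
    obtain ⟨p, hne, hch, hcl, hnd⟩ := hcyc
    have hlen : 1 ≤ p.length :=
      Nat.one_le_iff_ne_zero.2 (fun h0 => hne (List.length_eq_zero_iff.1 h0))
    have hle : algLE (G.tgen (G.s (p.head hne)) (0 + (p.length : ℤ)))
        (G.tgen (G.s (p.head hne)) 0) := by
      have := G.tgen_path_le p hne 0 hch
      rwa [hcl] at this
    rw [zero_add] at hle
    have h4 := (hcomp (G.tgen (G.s (p.head hne)) (p.length : ℤ))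
      (G.tgen_ne_zero _ _) (-(p.length : ℤ)) (by omega)).2
    apply h4
    rw [G.tshift_tgen, show (p.length : ℤ) + -(p.length : ℤ) = 0 by ring]
    exact hle
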